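/- Let n ≥ 1 and k ≥ 2 be integers, let H be a pairwise independent family of hash functions from {0,1}^n to {0,1}^k, and let S ⊆ {0,1}^n satisfy 2^(k−2) ≤ |S| ≤ 2^(k−1). For h ∈ H let N(h) = |{y ∈ S : h(y) = 0^k}|. Then for every x ∈ S, the conditional probability over h uniform in H that h(x) = 0^k given that N(h) = 1 is at most 4/|S|. In other words, conditioned on isolation succeeding, each element of S is the isolated element with probability at most 4/|S| (almost-uniform isolation). -/

import Mathlib

/-- A finite nonempty family `H` of functions from `{0,1}^n` to `{0,1}^k` is pairwise
independent if for every pair of distinct inputs and every pair of target values, the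
probability over a uniformly random `h ∈ H` of hitting both values is exactly `2^(-2k)`. -/
def PairwiseIndepHash {n k : ℕ} (H : Finset ((Fin n → Bool) → (Fin k → Bool))) : Prop :=
  H.Nonempty ∧
    ∀ x x' : Fin n → Bool, x ≠ x' → ∀ y y' : Fin k → Bool,
      ((H.filter (fun h => h x = y ∧ h x' = y')).card : ℝ) / (H.card : ℝ) = 1 / 2 ^ (2 * k)

/-- Almost-uniform isolation: if `2^(k-2) ≤ |S| ≤ 2^(k-1)`, then conditioned on the hash
isolating a unique element of `S` (the event `N(h) = 1`), each fixed `x ∈ S` is the isolated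
element with probability at most `4/|S|`. -/
lemma pow_split_aux (k : ℕ) (hk : 2 ≤ k) : (2:ℝ) ^ (2 * k) = 2 ^ (k - 1) * 2 ^ (k + 1) := by
  rw [← pow_add]
  congr 1
  omega

set_option maxHeartbeats 2000000 in
theorem almost_uniform_isolation (n k : ℕ) (hn : 1 ≤ n) (hk : 2 ≤ k)
    (H : Finset ((Fin n → Bool) → (Fin k → Bool))) (hH : PairwiseIndepHash H)
    (S : Finset (Fin n → Bool)) (hS₁ : 2 ^ (k - 2) ≤ S.card) (hS₂ : S.card ≤ 2 ^ (k - 1))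
    (x : Fin n → Bool) (hx : x ∈ S) :
    ((H.filter (fun h => (h x = fun _ => false) ∧
        (S.filter (fun y => h y = fun _ => false)).card = 1)).card : ℝ) /
      ((H.filter (fun h => (S.filter (fun y => h y = fun _ => false)).card = 1)).card : ℝ)
    ≤ 4 / (S.card : ℝ) := by
  obtain ⟨hne, hpi⟩ := hH
  set z0 : Fin k → Bool := fun _ => false with hz0
  have hm : (0:ℝ) < (H.card : ℝ) := by exact_mod_cast Finset.card_pos.mpr hne
  set m : ℝ := (H.card : ℝ) with hmdef
  -- joint cardinality
  have hjoint : ∀ w w' : Fin n → Bool, w ≠ w' →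
      ((H.filter (fun h => h w = z0 ∧ h w' = z0)).card : ℝ) = m / 2 ^ (2 * k) := by
    intro w w' hww
    have := hpi w w' hww z0 z0
    field_simp at this ⊢
    linarith [this]
  -- marginal cardinality
  have hmarg : ∀ w : Fin n → Bool,
      ((H.filter (fun h => h w = z0)).card : ℝ) = m / 2 ^ k := by
    intro w
    have i0 : Fin n := ⟨0, hn⟩
    set w' : Fin n → Bool := Function.update w i0 (!(w i0)) with hw'
    have hww : w ≠ w' := by
      intro h
      have : w i0 = w' i0 := by rw [← h]
      simp [hw', Function.update_self] at this
    have hpart : (H.filter (fun h => h w = z0)).card =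
        ∑ y' : Fin k → Bool, (H.filter (fun h => h w = z0 ∧ h w' = y')).card := by
      rw [Finset.card_eq_sum_card_fiberwise
        (f := fun h => h w') (t := Finset.univ) (fun _ _ => Finset.mem_univ _)]
      apply Finset.sum_congr rfl
      intro y' _
      rw [Finset.filter_filter]
    have hcast : ((H.filter (fun h => h w = z0)).card : ℝ) =
        ∑ y' : Fin k → Bool, ((H.filter (fun h => h w = z0 ∧ h w' = y')).card : ℝ) := by
      exact_mod_cast congrArg (Nat.cast : ℕ → ℝ) hpart
    rw [hcast]
    have hterm : ∀ y' : Fin k → Bool,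
        ((H.filter (fun h => h w = z0 ∧ h w' = y')).card : ℝ) = m / 2 ^ (2 * k) := by
      intro y'
      have := hpi w w' hww z0 y'
      field_simp at this ⊢
      linarith [this]
    rw [Finset.sum_congr rfl (fun y' _ => hterm y')]
    rw [Finset.sum_const, Finset.card_univ]
    have hcard : Fintype.card (Fin k → Bool) = 2 ^ k := by simp
    rw [hcard]
    have h2 : (2:ℝ) ^ (2 * k) = 2 ^ k * 2 ^ k := by rw [two_mul, pow_add]
    rw [h2]
    field_simp
    ring_nf
    rw [mul_assoc, ← mul_pow]
    norm_num
  -- abbreviations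
  set A : (Fin n → Bool) → Finset ((Fin n → Bool) → (Fin k → Bool)) :=
    fun y => H.filter (fun h => h y = z0 ∧ (S.filter (fun u => h u = z0)).card = 1) with hA
  -- upper bound for A y
  have hup : ∀ y : Fin n → Bool, ((A y).card : ℝ) ≤ m / 2 ^ k := by
    intro y
    have hsub : A y ⊆ H.filter (fun h => h y = z0) := by
      intro h hh
      simp only [hA, Finset.mem_filter] at hh ⊢
      exact ⟨hh.1, hh.2.1⟩
    calc ((A y).card : ℝ) ≤ ((H.filter (fun h => h y = z0)).card : ℝ) := by
          exact_mod_cast Finset.card_le_card hsub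
      _ = m / 2 ^ k := hmarg y
  -- lower bound for A y, y ∈ S
  have hlow : ∀ y ∈ S, m / 2 ^ (k + 1) ≤ ((A y).card : ℝ) := by
    intro y hy
    have hsub : H.filter (fun h => h y = z0) ⊆
        A y ∪ (S.erase y).biUnion (fun z => H.filter (fun h => h y = z0 ∧ h z = z0)) := by
      intro h hh
      simp only [Finset.mem_filter] at hh
      by_cases hN : (S.filter (fun u => h u = z0)).card = 1
      · exact Finset.mem_union_left _ (by simp [hA, Finset.mem_filter, hh.1, hh.2, hN])
      · apply Finset.mem_union_right
        have hyT : y ∈ S.filter (fun u => h u = z0) := Finset.mem_filter.mpr ⟨hy, hh.2⟩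
        have h1lt : 1 < (S.filter (fun u => h u = z0)).card := by
          have : 0 < (S.filter (fun u => h u = z0)).card := Finset.card_pos.mpr ⟨y, hyT⟩
          omega
        obtain ⟨z, hzT, hzy⟩ := Finset.exists_mem_ne h1lt y
        simp only [Finset.mem_filter] at hzT
        refine Finset.mem_biUnion.mpr ⟨z, Finset.mem_erase.mpr ⟨hzy, hzT.1⟩, ?_⟩
        exact Finset.mem_filter.mpr ⟨hh.1, hh.2, hzT.2⟩
    have hcard : (H.filter (fun h => h y = z0)).card ≤
        (A y).card + ∑ z ∈ S.erase y, (H.filter (fun h => h y = z0 ∧ h z = z0)).card :=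
      le_trans (Finset.card_le_card hsub)
        (le_trans (Finset.card_union_le _ _)
          (by gcongr; exact Finset.card_biUnion_le))
    have hcardR : m / 2 ^ k ≤ ((A y).card : ℝ) +
        ∑ z ∈ S.erase y, ((H.filter (fun h => h y = z0 ∧ h z = z0)).card : ℝ) := by
      rw [← hmarg y]
      exact_mod_cast hcard
    have hsumR : ∑ z ∈ S.erase y, ((H.filter (fun h => h y = z0 ∧ h z = z0)).card : ℝ)
        = (S.erase y).card * (m / 2 ^ (2 * k)) := by
      rw [Finset.sum_congr rfl (fun z hz => hjoint y z (Ne.symm (Finset.mem_erase.mp hz).1)),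
        Finset.sum_const, nsmul_eq_mul]
    have hScard : ((S.erase y).card : ℝ) ≤ 2 ^ (k - 1) := by
      have : (S.erase y).card ≤ 2 ^ (k - 1) :=
        le_trans (Finset.card_le_card (Finset.erase_subset _ _)) hS₂
      exact_mod_cast this
    have hkey : ((S.erase y).card : ℝ) * (m / 2 ^ (2 * k)) ≤ m / 2 ^ (k + 1) := by
      have h2 : (2:ℝ) ^ (k - 1) * (m / 2 ^ (2 * k)) = m / 2 ^ (k + 1) := by
        rw [pow_split_aux k hk]
        field_simp
      rw [← h2]
      have hmle : 0 ≤ m / 2 ^ (2 * k) := by positivity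
      exact mul_le_mul_of_nonneg_right hScard hmle
    have hfinal : m / 2 ^ k - m / 2 ^ (k + 1) = m / 2 ^ (k + 1) := by
      rw [pow_succ]
      ring
    linarith
  -- sum identity for the denominator
  have hsum : (H.filter (fun h => (S.filter (fun u => h u = z0)).card = 1)).card
      = ∑ y ∈ S, (A y).card := by
    have hinner : ∀ h : (Fin n → Bool) → (Fin k → Bool),
        (∑ y ∈ S, if h y = z0 ∧ (S.filter (fun u => h u = z0)).card = 1 then 1 else 0)
        = (if (S.filter (fun u => h u = z0)).card = 1 then 1 else 0) := by
      intro h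
      by_cases hN : (S.filter (fun u => h u = z0)).card = 1
      · simp only [hN, and_true, if_pos]
        rw [← Finset.card_filter]
        exact hN
      · simp [hN]
    calc (H.filter (fun h => (S.filter (fun u => h u = z0)).card = 1)).card
        = ∑ h ∈ H, if (S.filter (fun u => h u = z0)).card = 1 then 1 else 0 :=
          Finset.card_filter _ _
      _ = ∑ h ∈ H, ∑ y ∈ S, (if h y = z0 ∧ (S.filter (fun u => h u = z0)).card = 1
            then 1 else 0) := by
          exact Finset.sum_congr rfl (fun h _ => (hinner h).symm)
      _ = ∑ y ∈ S, ∑ h ∈ H, (if h y = z0 ∧ (S.filter (fun u => h u = z0)).card = 1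
            then 1 else 0) := Finset.sum_comm
      _ = ∑ y ∈ S, (A y).card :=
          Finset.sum_congr rfl (fun y _ => (Finset.card_filter _ _).symm)
  -- positivity of |S|
  have hS0 : (0:ℝ) < (S.card : ℝ) := by
    have : 0 < S.card := lt_of_lt_of_le (Nat.pow_pos (by norm_num)) hS₁
    exact_mod_cast this
  -- lower bound on denominator
  set D : ℝ := ((H.filter (fun h => (S.filter (fun u => h u = z0)).card = 1)).card : ℝ)
    with hD
  have hDsum : D = ∑ y ∈ S, ((A y).card : ℝ) := by
    rw [hD]
    exact_mod_cast congrArg (Nat.cast : ℕ → ℝ) hsum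
  have hDge : (S.card : ℝ) * (m / 2 ^ (k + 1)) ≤ D := by
    rw [hDsum]
    calc ((S.card : ℝ)) * (m / 2 ^ (k + 1)) = ∑ _y ∈ S, m / 2 ^ (k + 1) := by
          rw [Finset.sum_const, nsmul_eq_mul]
      _ ≤ ∑ y ∈ S, ((A y).card : ℝ) := Finset.sum_le_sum hlow
  have hD0 : 0 < D := by
    have : (0:ℝ) < (S.card : ℝ) * (m / 2 ^ (k + 1)) := by positivity
    linarith
  -- finish
  rw [div_le_div_iff₀ hD0 hS0]
  show ((A x).card : ℝ) * (S.card : ℝ) ≤ 4 * D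
  calc ((A x).card : ℝ) * (S.card : ℝ)
      ≤ (m / 2 ^ k) * (S.card : ℝ) := mul_le_mul_of_nonneg_right (hup x) (le_of_lt hS0)
    _ = 2 * ((S.card : ℝ) * (m / 2 ^ (k + 1))) := by rw [pow_succ]; ring
    _ ≤ 2 * D := by linarith
    _ ≤ 4 * D := by linarith
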